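/- For n ≥ 5, a system with n coin types C = (1, c₂, ..., c_{n-1}, 2c_{n-1} − c₂) is canonical with noncanonical subsystem C' = (1, c₂, ..., c_{n-1}) if and only if C = (1, 2, 3, ..., n−3, c_{n-2}, c_{n-2}+1, 2c_{n-2}) and c_{n-2} > n−2. -/
import Mathlib


open Finset

/-- `x` is a representation of value `v` in the coin system `c 1, …, c n`. -/
def IsRepr (n : ℕ) (c : ℕ → ℕ) (v : ℕ) (x : ℕ → ℕ) : Prop :=
  ∑ i ∈ Finset.Icc 1 n, c i * x i = v

/-- Minimum number of coins over all representations of `v`. -/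
noncomputable def opt (n : ℕ) (c : ℕ → ℕ) (v : ℕ) : ℕ :=
  sInf {k | ∃ x : ℕ → ℕ, IsRepr n c v x ∧ ∑ i ∈ Finset.Icc 1 n, x i = k}

/-- Number of coins used by the greedy algorithm to pay `v`. -/
def grd (n : ℕ) (c : ℕ → ℕ) (v : ℕ) : ℕ :=
  if hv : v = 0 then 0
  else
    let m := ((Finset.Icc 1 n).filter (fun i => c i ≤ v)).sup c
    if hm : 0 < m then grd n c (v - m) + 1 else 0
termination_by v
decreasing_by omega

/-- The system is canonical: greedy is optimal for every positive value. -/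
def Canonical (n : ℕ) (c : ℕ → ℕ) : Prop :=
  ∀ v, 0 < v → opt n c v = grd n c v

/-- `w` is a counterexample to the system. -/
def IsCex (n : ℕ) (c : ℕ → ℕ) (w : ℕ) : Prop :=
  0 < w ∧ opt n c w < grd n c w

/-- `w` is the minimum counterexample to the system. -/
def MinCex (n : ℕ) (c : ℕ → ℕ) (w : ℕ) : Prop :=
  IsCex n c w ∧ ∀ u, IsCex n c u → w ≤ u

/-- A (currency) system: first coin is `1` and coins strictly increase. -/
def IsSystem (n : ℕ) (c : ℕ → ℕ) : Prop :=
  c 1 = 1 ∧ StrictMonoOn c (Set.Icc 1 n)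


section Generic

variable {n : ℕ} {c : ℕ → ℕ} {v w u : ℕ}

lemma grd_zero : grd n c 0 = 0 := by rw [grd]; simp

lemma grd_unfold (hc1 : c 1 = 1) (hn : 1 ≤ n) (hv : 0 < v) :
    ∃ j ∈ Finset.Icc 1 n, c j ≤ v ∧ 0 < c j ∧
      (∀ i ∈ Finset.Icc 1 n, c i ≤ v → c i ≤ c j) ∧
      grd n c v = grd n c (v - c j) + 1 := by
  have h1 : (1 : ℕ) ∈ (Finset.Icc 1 n).filter (fun i => c i ≤ v) := by
    simp [Finset.mem_filter, hc1, hn]; omega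
  obtain ⟨j, hj, hsup⟩ := Finset.exists_mem_eq_sup _ ⟨1, h1⟩ c
  rw [Finset.mem_filter] at hj
  have hcj : 0 < c j := by
    have := Finset.le_sup (f := c) h1
    rw [hsup] at this; omega
  refine ⟨j, hj.1, hj.2, hcj, ?_, ?_⟩
  · intro i hi hci
    have hmem : i ∈ (Finset.Icc 1 n).filter (fun i => c i ≤ v) :=
      Finset.mem_filter.2 ⟨hi, hci⟩
    have := Finset.le_sup (f := c) hmem
    rw [hsup] at this; exact this
  · rw [grd, dif_neg hv.ne']
    simp only [hsup]
    rw [dif_pos hcj]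

lemma grd_step {j : ℕ} (hj : j ∈ Finset.Icc 1 n) (hcj : c j ≤ v) (hpos : 0 < c j)
    (hmax : ∀ i ∈ Finset.Icc 1 n, c i ≤ v → c i ≤ c j) :
    grd n c v = grd n c (v - c j) + 1 := by
  have hv : v ≠ 0 := by omega
  have hsup : ((Finset.Icc 1 n).filter (fun i => c i ≤ v)).sup c = c j := by
    refine le_antisymm (Finset.sup_le ?_) (Finset.le_sup (Finset.mem_filter.2 ⟨hj, hcj⟩))
    intro i hi; rw [Finset.mem_filter] at hi; exact hmax i hi.1 hi.2
  rw [grd, dif_neg hv]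
  simp only [hsup]
  rw [dif_pos hpos]

lemma grd_pos (hc1 : c 1 = 1) (hn : 1 ≤ n) (hv : 0 < v) : 0 < grd n c v := by
  obtain ⟨j, _, _, _, _, he⟩ := grd_unfold hc1 hn hv
  omega

lemma grd_le_self (hc1 : c 1 = 1) (hn : 1 ≤ n) : ∀ v, grd n c v ≤ v := by
  intro v
  induction v using Nat.strong_induction_on with
  | _ v ih =>
    rcases Nat.eq_zero_or_pos v with rfl | hv
    · simp [grd_zero]
    · obtain ⟨j, _, hle, hpos, _, he⟩ := grd_unfold hc1 hn hv
      have := ih (v - c j) (by omega)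
      omega


lemma isRepr_ones (hc1 : c 1 = 1) (hn : 1 ≤ n) (v : ℕ) :
    IsRepr n c v (fun i => if i = 1 then v else 0) := by
  unfold IsRepr
  rw [Finset.sum_eq_single 1]
  · simp [hc1]
  · intro i _ hne; simp [hne]
  · intro h; exact absurd (Finset.mem_Icc.2 ⟨le_refl 1, hn⟩) h

lemma opt_le_of {x : ℕ → ℕ} (h : IsRepr n c v x) :
    opt n c v ≤ ∑ i ∈ Finset.Icc 1 n, x i :=
  Nat.sInf_le ⟨x, h, rfl⟩

lemma opt_spec (hc1 : c 1 = 1) (hn : 1 ≤ n) (v : ℕ) :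
    ∃ x, IsRepr n c v x ∧ (∑ i ∈ Finset.Icc 1 n, x i) = opt n c v := by
  have hne : {k | ∃ x : ℕ → ℕ, IsRepr n c v x ∧ ∑ i ∈ Finset.Icc 1 n, x i = k}.Nonempty :=
    ⟨_, _, isRepr_ones hc1 hn v, rfl⟩
  exact Nat.sInf_mem hne

lemma coin_le_of_repr {x : ℕ → ℕ} {j : ℕ} (h : IsRepr n c v x)
    (hj : j ∈ Finset.Icc 1 n) (hx : 0 < x j) : c j ≤ v := by
  have h1 : c j * x j ≤ v := h ▸ Finset.single_le_sum (f := fun i => c i * x i)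
    (fun i _ => Nat.zero_le _) hj
  calc c j ≤ c j * x j := Nat.le_mul_of_pos_right _ hx
  _ ≤ v := h1

lemma sum_update_split (s : Finset ℕ) (F : ℕ → ℕ → ℕ) (x : ℕ → ℕ) (j b : ℕ) (hj : j ∈ s) :
    ∑ i ∈ s, F i (Function.update x j b i) = (∑ i ∈ s.erase j, F i (x i)) + F j b := by
  rw [← Finset.sum_erase_add _ _ hj, Function.update_self]
  congr 1
  apply Finset.sum_congr rfl
  intro i hi
  rw [Function.update_of_ne (Finset.mem_erase.1 hi).1]

lemma sum_erase_split (s : Finset ℕ) (f : ℕ → ℕ) {j : ℕ} (hj : j ∈ s) :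
    ∑ i ∈ s, f i = (∑ i ∈ s.erase j, f i) + f j :=
  (Finset.sum_erase_add s f hj).symm

lemma repr_remove {x : ℕ → ℕ} {j : ℕ} (h : IsRepr n c v x)
    (hj : j ∈ Finset.Icc 1 n) (hx : 0 < x j) :
    IsRepr n c (v - c j) (Function.update x j (x j - 1)) ∧
      (∑ i ∈ Finset.Icc 1 n, Function.update x j (x j - 1) i) + 1
        = ∑ i ∈ Finset.Icc 1 n, x i := by
  have hcle : c j * x j ≤ v := h ▸ Finset.single_le_sum (f := fun i => c i * x i)
    (fun i _ => Nat.zero_le _) hj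
  have hc : c j ≤ v := coin_le_of_repr h hj hx
  obtain ⟨t, ht⟩ : ∃ t, x j = t + 1 := ⟨x j - 1, by omega⟩
  have hmul : c j * (t + 1) = c j * t + c j := by ring
  constructor
  · unfold IsRepr at h ⊢
    rw [sum_erase_split _ _ hj] at h
    rw [show (fun i => c i * Function.update x j (x j - 1) i)
        = (fun i => (fun i t => c i * t) i (Function.update x j (x j - 1) i)) from rfl,
      sum_update_split _ _ _ _ _ hj]
    have h2 : c j * (x j - 1) = c j * t := by rw [ht]; simp
    rw [ht] at h
    omega
  · rw [Finset.sum_update_of_mem hj, ← Finset.erase_eq, sum_erase_split _ x hj]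
    omega

lemma repr_exists_pos (h : IsRepr n c v x) (hv : 0 < v) :
    ∃ j ∈ Finset.Icc 1 n, 0 < x j := by
  by_contra hcon
  push_neg at hcon
  have : ∑ i ∈ Finset.Icc 1 n, c i * x i = 0 := by
    apply Finset.sum_eq_zero
    intro i hi
    have hx0 : x i = 0 := by have := hcon i hi; omega
    simp [hx0]
  unfold IsRepr at h; omega

lemma opt_pos (hv : 0 < v) {x : ℕ → ℕ} (h : IsRepr n c v x) :
    0 < ∑ i ∈ Finset.Icc 1 n, x i := by
  obtain ⟨j, hj, hx⟩ := repr_exists_pos h hv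
  have := Finset.single_le_sum (f := x) (fun i _ => Nat.zero_le _) hj
  omega

lemma grd_repr (hc1 : c 1 = 1) (hn : 1 ≤ n) :
    ∀ v, ∃ x, IsRepr n c v x ∧ ∑ i ∈ Finset.Icc 1 n, x i = grd n c v := by
  intro v
  induction v using Nat.strong_induction_on with
  | _ v ih =>
    rcases Nat.eq_zero_or_pos v with rfl | hv
    · exact ⟨fun _ => 0, by simp [IsRepr], by simp [grd_zero]⟩
    · obtain ⟨j, hj, hle, hpos, _, he⟩ := grd_unfold hc1 hn hv
      obtain ⟨x, hx, hs⟩ := ih (v - c j) (by omega)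
      have hmul : c j * (x j + 1) = c j * x j + c j := by ring
      refine ⟨Function.update x j (x j + 1), ?_, ?_⟩
      · unfold IsRepr at hx ⊢
        rw [show (fun i => c i * Function.update x j (x j + 1) i)
            = (fun i => (fun i t => c i * t) i (Function.update x j (x j + 1) i)) from rfl,
          sum_update_split _ _ _ _ _ hj]
        rw [sum_erase_split _ _ hj] at hx
        omega
      · rw [Finset.sum_update_of_mem hj, ← Finset.erase_eq]
        rw [sum_erase_split _ x hj] at hs
        omega

lemma opt_le_grd (hc1 : c 1 = 1) (hn : 1 ≤ n) (v : ℕ) : opt n c v ≤ grd n c v := by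
  obtain ⟨x, hx, hs⟩ := grd_repr hc1 hn v
  exact hs ▸ opt_le_of hx

lemma opt_add_le (hc1 : c 1 = 1) (hn : 1 ≤ n) (u v : ℕ) :
    opt n c (u + v) ≤ opt n c u + opt n c v := by
  obtain ⟨x, hx, hxs⟩ := opt_spec hc1 hn u
  obtain ⟨y, hy, hys⟩ := opt_spec hc1 hn v
  have : IsRepr n c (u + v) (fun i => x i + y i) := by
    unfold IsRepr at *
    simp only [Nat.mul_add, Finset.sum_add_distrib, hx, hy]
  have h := opt_le_of this
  simp only [Finset.sum_add_distrib] at h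
  omega

lemma opt_coin {j : ℕ} (hj : j ∈ Finset.Icc 1 n) : opt n c (c j) ≤ 1 := by
  have : IsRepr n c (c j) (fun i => if i = j then 1 else 0) := by
    unfold IsRepr
    rw [Finset.sum_eq_single j]
    · simp
    · intro i _ hne; simp [hne]
    · intro h; exact absurd hj h
  have h := opt_le_of this
  rwa [Finset.sum_eq_single j, if_pos rfl] at h
  · intro i _ hne; simp [hne]
  · intro h; exact absurd hj h

lemma repr_bound {B : ℕ} (hB : ∀ i ∈ Finset.Icc 1 n, c i ≤ B) {x : ℕ → ℕ}
    (h : IsRepr n c v x) : v ≤ B * ∑ i ∈ Finset.Icc 1 n, x i := by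
  unfold IsRepr at h
  calc v = ∑ i ∈ Finset.Icc 1 n, c i * x i := h.symm
  _ ≤ ∑ i ∈ Finset.Icc 1 n, B * x i :=
      Finset.sum_le_sum (fun i hi => Nat.mul_le_mul_right _ (hB i hi))
  _ = B * ∑ i ∈ Finset.Icc 1 n, x i := by rw [Finset.mul_sum]


lemma grd_eq_self (hc1 : c 1 = 1) (hn : 1 ≤ n) :
    ∀ v, (∀ i, 2 ≤ i → i ≤ n → v < c i) → grd n c v = v := by
  intro v
  induction v using Nat.strong_induction_on with
  | _ v ih =>
    intro hsmall
    rcases Nat.eq_zero_or_pos v with rfl | hv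
    · exact grd_zero
    · obtain ⟨j, hj, hle, hpos, _, he⟩ := grd_unfold hc1 hn hv
      rw [Finset.mem_Icc] at hj
      have hj1 : j = 1 := by
        by_contra hne
        exact absurd hle (not_le.2 (hsmall j (by omega) hj.2))
      rw [hj1, hc1] at he
      have := ih (v - 1) (by omega) (fun i h2 hn' => by
        have := hsmall i h2 hn'; omega)
      omega

lemma grd_le_one_coin (hc1 : c 1 = 1) (hn : 1 ≤ n) (hv : 0 < v)
    (h : grd n c v ≤ 1) : ∃ j ∈ Finset.Icc 1 n, c j = v := by
  obtain ⟨j, hj, hle, hpos, _, he⟩ := grd_unfold hc1 hn hv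
  refine ⟨j, hj, ?_⟩
  have : grd n c (v - c j) = 0 := by omega
  rcases Nat.eq_zero_or_pos (v - c j) with h0 | hp
  · omega
  · exact absurd this (by have := grd_pos hc1 hn hp; omega)

lemma grd_restrict (hv : v < c (n + 1)) : grd (n + 1) c v = grd n c v := by
  induction v using Nat.strong_induction_on with
  | _ v ih =>
    rcases Nat.eq_zero_or_pos v with rfl | hvp
    · rw [grd_zero, grd_zero]
    · have hfil : (Finset.Icc 1 (n + 1)).filter (fun i => c i ≤ v)
          = (Finset.Icc 1 n).filter (fun i => c i ≤ v) := by
        rw [← Finset.insert_Icc_right_eq_Icc_add_one (by omega), Finset.filter_insert,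
          if_neg (by omega)]
      rw [grd, grd, dif_neg hvp.ne', dif_neg hvp.ne']
      simp only [hfil]
      split_ifs with hm
      · rw [ih _ (by omega)]
        omega
      · rfl

lemma opt_restrict (hc1 : c 1 = 1) (hn : 1 ≤ n) (hpos : 0 < c (n + 1))
    (hv : v < c (n + 1)) : opt (n + 1) c v = opt n c v := by
  apply le_antisymm
  · obtain ⟨x, hx, hxs⟩ := opt_spec hc1 hn v
    set x' : ℕ → ℕ := fun i => if i ≤ n then x i else 0 with hx'def
    have hrepr : IsRepr (n + 1) c v x' := by
      unfold IsRepr at hx ⊢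
      rw [Finset.sum_Icc_succ_top (by omega)]
      have : x' (n + 1) = 0 := by simp [hx'def]
      rw [this]
      rw [Finset.sum_congr rfl (fun i hi => by
        rw [Finset.mem_Icc] at hi
        simp [hx'def, hi.2] : ∀ i ∈ Finset.Icc 1 n, c i * x' i = c i * x i)]
      omega
    have h1 := opt_le_of hrepr
    have h2 : ∑ i ∈ Finset.Icc 1 (n + 1), x' i = ∑ i ∈ Finset.Icc 1 n, x i := by
      rw [Finset.sum_Icc_succ_top (by omega)]
      have : x' (n + 1) = 0 := by simp [hx'def]
      rw [this]
      rw [Finset.sum_congr rfl (fun i hi => by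
        rw [Finset.mem_Icc] at hi
        simp [hx'def, hi.2] : ∀ i ∈ Finset.Icc 1 n, x' i = x i)]
      simp
    rw [h2] at h1
    exact le_trans h1 (le_of_eq hxs)
  · obtain ⟨x, hx, hxs⟩ := opt_spec hc1 (by omega : 1 ≤ n + 1) v
    have hterm : c (n + 1) * x (n + 1) ≤ v := by
      unfold IsRepr at hx
      exact hx ▸ Finset.single_le_sum (f := fun i => c i * x i)
        (fun i _ => Nat.zero_le _) (Finset.mem_Icc.2 ⟨by omega, le_refl _⟩)
    have hx0 : x (n + 1) = 0 := by
      by_contra hne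
      have : c (n + 1) ≤ c (n + 1) * x (n + 1) :=
        Nat.le_mul_of_pos_right _ (by omega)
      omega
    have hrepr : IsRepr n c v x := by
      unfold IsRepr at hx ⊢
      rw [Finset.sum_Icc_succ_top (by omega), hx0] at hx
      omega
    have h1 := opt_le_of hrepr
    have h2 : ∑ i ∈ Finset.Icc 1 (n + 1), x i = ∑ i ∈ Finset.Icc 1 n, x i := by
      rw [Finset.sum_Icc_succ_top (by omega), hx0]
      simp
    rw [h2] at hxs
    omega

lemma exists_min_cex (hc1 : c 1 = 1) (hn : 1 ≤ n) (h : ¬ Canonical n c) :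
    ∃ w, IsCex n c w ∧ ∀ u, 0 < u → u < w → opt n c u = grd n c u := by
  unfold Canonical at h
  push_neg at h
  obtain ⟨v, hv, hne⟩ := h
  have hcex : IsCex n c v := ⟨hv, lt_of_le_of_ne (opt_le_grd hc1 hn v) hne⟩
  have hS : {u | IsCex n c u}.Nonempty := ⟨v, hcex⟩
  refine ⟨sInf {u | IsCex n c u}, Nat.sInf_mem hS, fun u hu hlt => ?_⟩
  have : u ∉ {u | IsCex n c u} := fun hmem => absurd (Nat.sInf_le hmem) (by omega)
  simp only [Set.mem_setOf_eq, IsCex] at this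
  push_neg at this
  exact le_antisymm (opt_le_grd hc1 hn u) (this hu)

lemma minCex_lt {m : ℕ} (hm : 2 ≤ m) (hc1 : c 1 = 1)
    (hmono : StrictMonoOn c (Set.Icc 1 m))
    (hw : IsCex m c w) (hmin : ∀ u, 0 < u → u < w → opt m c u = grd m c u) :
    w < c (m - 1) + c m := by
  by_contra hcon
  push_neg at hcon
  obtain ⟨hwpos, hlt⟩ := hw
  have hm1 : (1:ℕ) ≤ m := by omega
  have mono : ∀ i k, 1 ≤ i → i ≤ k → k ≤ m → c i ≤ c k := fun i k h1 h2 h3 =>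
    hmono.monotoneOn ⟨h1, by omega⟩ ⟨by omega, h3⟩ h2
  have hmm : m ∈ Finset.Icc 1 m := Finset.mem_Icc.2 ⟨hm1, le_refl _⟩
  have hcm1 : 1 ≤ c (m - 1) := by
    have := mono 1 (m - 1) (le_refl _) (by omega) (by omega); omega
  have hcm1m : c (m - 1) < c m := hmono ⟨by omega, by omega⟩ ⟨hm1, le_refl _⟩ (by omega)
  have hcm : 0 < c m := by omega
  obtain ⟨x, hx, hxs⟩ := opt_spec hc1 hm1 w
  obtain ⟨j, hj, hxj⟩ := repr_exists_pos hx hwpos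
  have hj' := Finset.mem_Icc.1 hj
  have hcjw : c j ≤ w := coin_le_of_repr hx hj hxj
  have hcjpos : 0 < c j := by
    have := mono 1 j (le_refl _) hj'.1 hj'.2; omega
  have hoptpos : 0 < opt m c w := hxs ▸ opt_pos hwpos hx
  obtain ⟨hx', hs'⟩ := repr_remove hx hj hxj
  have hoptle : opt m c (w - c j) ≤ opt m c w - 1 := by
    have := opt_le_of hx'; omega
  have hoptge : opt m c w ≤ opt m c (w - c j) + 1 := by
    have h3 := opt_add_le hc1 hm1 (w - c j) (c j)
    have h4 := opt_coin (n := m) (c := c) hj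
    rw [show (w - c j) + c j = w by omega] at h3
    omega
  have gstep : ∀ v, c m ≤ v → grd m c v = grd m c (v - c m) + 1 := fun v hv =>
    grd_step hmm hv hcm (fun i hi _ => by
      have hi' := Finset.mem_Icc.1 hi
      exact mono i m hi'.1 hi'.2 (le_refl _))
  by_cases hcase : j = m
  · have hcjm : c j = c m := by rw [hcase]
    have h1 : 0 < w - c j := by omega
    have e1 : opt m c (w - c j) = grd m c (w - c j) := hmin _ h1 (by omega)
    have e2 : grd m c w = grd m c (w - c j) + 1 := by
      have := gstep w (by omega)
      rw [← hcjm] at this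
      exact this
    omega
  · have hcjle : c j ≤ c (m - 1) := mono j (m - 1) hj'.1 (by omega) (by omega)
    have hwge : c j + c m ≤ w := by omega
    have e1 : opt m c (w - c j) = grd m c (w - c j) := hmin _ (by omega) (by omega)
    have e2 : grd m c (w - c j) = grd m c (w - c j - c m) + 1 := gstep _ (by omega)
    have e3 : opt m c (w - c j - c m) ≤ grd m c (w - c j - c m) :=
      opt_le_grd hc1 hm1 _
    have e4 : opt m c (w - c m) ≤ opt m c (w - c m - c j) + 1 := by
      have h3 := opt_add_le hc1 hm1 (w - c m - c j) (c j)
      have h4 := opt_coin (n := m) (c := c) hj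
      rw [show (w - c m - c j) + c j = w - c m by omega] at h3
      omega
    have e5 : w - c m - c j = w - c j - c m := by omega
    have e6 : opt m c (w - c m) = grd m c (w - c m) := hmin _ (by omega) (by omega)
    have e7 : grd m c w = grd m c (w - c m) + 1 := gstep w (by omega)
    rw [e5] at e4
    omega

end Generic
section DivHelpers

lemma ndivle1 {k m : ℕ} (hk : 0 < k) (h : m < 2 * k) : m / k ≤ 1 := by
  have : m / k < 2 := (Nat.div_lt_iff_lt_mul hk).2 (by omega)
  omega

lemma ndivge1 {k m : ℕ} (hk : 0 < k) (h : k ≤ m) : 1 ≤ m / k :=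
  (Nat.one_le_div_iff hk).2 h

lemma div_eq_one' {k m : ℕ} (hk : 0 < k) (h1 : k ≤ m) (h2 : m < 2 * k) : m / k = 1 := by
  have := ndivle1 hk h2
  have := ndivge1 hk h1
  omega

lemma div_add_le' {k m s : ℕ} (hk : 0 < k) (h : s ≤ k) : (m + s) / k ≤ m / k + 1 := by
  calc (m + s) / k ≤ (m + k) / k := Nat.div_le_div_right (by omega)
  _ = m / k + 1 := Nat.add_div_right _ hk

end DivHelpers

/-- auxiliary greedy-count function on one period -/
def hf (k p r : ℕ) : ℕ :=
  if r = 0 then 0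
  else if r < p then (r + k - 1) / k
  else if r ≤ p + 1 then 1
  else (r - p - 1 + k - 1) / k + 1

/-- closed form for the greedy count -/
def ff (k p v : ℕ) : ℕ := v / (2 * p) + hf k p (v % (2 * p))

section HF

variable {k p : ℕ}

lemma hf_zero : hf k p 0 = 0 := by simp [hf]

lemma hf_small {r : ℕ} (h1 : 1 ≤ r) (h2 : r < p) : hf k p r = (r + k - 1) / k := by
  unfold hf
  rw [if_neg (by omega), if_pos h2]

lemma hf_p (hp : 0 < p) : hf k p p = 1 := by
  unfold hf
  rw [if_neg (by omega), if_neg (by omega), if_pos (by omega)]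

lemma hf_big {r : ℕ} (hk : 1 ≤ k) (hp : 0 < p) (h : p + 1 ≤ r) :
    hf k p r = (r - p - 1 + k - 1) / k + 1 := by
  rcases eq_or_lt_of_le h with h' | h'
  · have : r - p - 1 + k - 1 = k - 1 := by omega
    rw [this]
    have h0 : (k - 1) / k = 0 := Nat.div_eq_of_lt (by omega)
    rw [h0, ← h']
    unfold hf
    rw [if_neg (by omega), if_neg (by omega), if_pos (by omega)]
  · simp only [hf, if_neg (by omega : ¬ r = 0), if_neg (by omega : ¬ r < p),
      if_neg (by omega : ¬ r ≤ p + 1)]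

lemma ff_lt {v : ℕ} (hp : 0 < p) (h : v < 2 * p) : ff k p v = hf k p v := by
  unfold ff
  rw [Nat.div_eq_of_lt h, Nat.mod_eq_of_lt h, Nat.zero_add]

lemma ff_shift (v : ℕ) (hp : 0 < p) : ff k p (v + 2 * p) = ff k p v + 1 := by
  unfold ff
  rw [Nat.add_div_right _ (by omega), Nat.add_mod_right]
  omega

lemma ff_shift' {v : ℕ} (hp : 0 < p) (h : 2 * p ≤ v) : ff k p v = ff k p (v - 2 * p) + 1 := by
  have := ff_shift (k := k) (v - 2 * p) hp
  rw [show v - 2 * p + 2 * p = v by omega] at this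
  exact this

end HF

section Closed

variable {k p : ℕ} {c : ℕ → ℕ}

/-- the coin values of the special system -/
def CoinShape (k p : ℕ) (c : ℕ → ℕ) : Prop :=
  (∀ i, 1 ≤ i → i ≤ k → c i = i) ∧ c (k+1) = p ∧ c (k+2) = p + 1 ∧ c (k+3) = 2 * p

lemma coin_cases (hs : CoinShape k p c) :
    ∀ i ∈ Finset.Icc 1 (k+3),
      (1 ≤ i ∧ i ≤ k ∧ c i = i) ∨ (i = k+1 ∧ c i = p) ∨ (i = k+2 ∧ c i = p+1)
        ∨ (i = k+3 ∧ c i = 2*p) := by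
  intro i hi
  rw [Finset.mem_Icc] at hi
  obtain ⟨hsm, h1, h2, h3⟩ := hs
  rcases (by omega : (1 ≤ i ∧ i ≤ k) ∨ i = k+1 ∨ i = k+2 ∨ i = k+3) with h | rfl | rfl | rfl
  · exact Or.inl ⟨h.1, h.2, hsm i h.1 h.2⟩
  · exact Or.inr (Or.inl ⟨rfl, h1⟩)
  · exact Or.inr (Or.inr (Or.inl ⟨rfl, h2⟩))
  · exact Or.inr (Or.inr (Or.inr ⟨rfl, h3⟩))

lemma grd_closed (hk : 2 ≤ k) (hp : k + 2 ≤ p) (hs : CoinShape k p c) :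
    ∀ v, grd (k+3) c v = ff k p v := by
  have hcc := coin_cases hs
  obtain ⟨hsm, h1, h2, h3⟩ := hs
  intro v
  induction v using Nat.strong_induction_on with
  | _ v ih =>
    rcases (by omega : v = 0 ∨ (1 ≤ v ∧ v ≤ k) ∨ (k < v ∧ v < p) ∨ p = v ∨ p + 1 = v
        ∨ (p + 2 ≤ v ∧ v < 2*p) ∨ 2*p ≤ v) with rfl | hv | hv | rfl | rfl | hv | hv
    · rw [grd_zero]; unfold ff; rw [Nat.zero_div, Nat.zero_mod, hf_zero]
    · -- 1 ≤ v ≤ k : one coin v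
      have hcv : c v = v := hsm v hv.1 hv.2
      have hstep := grd_step (n := k+3) (c := c) (v := v) (j := v)
        (Finset.mem_Icc.2 (by omega)) (by omega) (by omega)
        (fun i hi hle => by
          rcases hcc i hi with ⟨_,_,h⟩|⟨_,h⟩|⟨_,h⟩|⟨_,h⟩ <;> omega)
      rw [hstep, hcv, Nat.sub_self, grd_zero, ff_lt (by omega) (by omega),
        hf_small hv.1 (by omega), div_eq_one' (by omega) (by omega) (by omega)]
    · -- k < v < p : coin k
      have hck : c k = k := hsm k (by omega) le_rfl
      have hstep := grd_step (n := k+3) (c := c) (v := v) (j := k)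
        (Finset.mem_Icc.2 (by omega)) (by omega) (by omega)
        (fun i hi hle => by
          rcases hcc i hi with ⟨_,_,h⟩|⟨_,h⟩|⟨_,h⟩|⟨_,h⟩ <;> omega)
      rw [hstep, hck, ih (v - k) (by omega), ff_lt (by omega) (by omega),
        ff_lt (by omega) (by omega), hf_small (by omega) (by omega),
        hf_small (by omega) (by omega),
        show v - k + k - 1 = v - 1 by omega,
        show v + k - 1 = (v - 1) + k by omega,
        Nat.add_div_right _ (by omega)]
    · -- v = p
      have hstep := grd_step (n := k+3) (c := c) (v := p) (j := k+1)
        (Finset.mem_Icc.2 (by omega)) (by omega) (by omega)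
        (fun i hi hle => by
          rcases hcc i hi with ⟨_,_,h⟩|⟨_,h⟩|⟨_,h⟩|⟨_,h⟩ <;> omega)
      rw [hstep, h1, Nat.sub_self, grd_zero, ff_lt (by omega) (by omega), hf_p (by omega)]
    · -- v = p + 1
      have hstep := grd_step (n := k+3) (c := c) (v := p+1) (j := k+2)
        (Finset.mem_Icc.2 (by omega)) (by omega) (by omega)
        (fun i hi hle => by
          rcases hcc i hi with ⟨_,_,h⟩|⟨_,h⟩|⟨_,h⟩|⟨_,h⟩ <;> omega)
      rw [hstep, h2, Nat.sub_self, grd_zero, ff_lt (by omega) (by omega),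
        hf_big (by omega) (by omega) le_rfl,
        show p + 1 - p - 1 + k - 1 = k - 1 by omega,
        Nat.div_eq_of_lt (by omega)]
    · -- p + 2 ≤ v < 2p : coin p+1
      have hstep := grd_step (n := k+3) (c := c) (v := v) (j := k+2)
        (Finset.mem_Icc.2 (by omega)) (by omega) (by omega)
        (fun i hi hle => by
          rcases hcc i hi with ⟨_,_,h⟩|⟨_,h⟩|⟨_,h⟩|⟨_,h⟩ <;> omega)
      rw [hstep, h2, ih (v - (p+1)) (by omega), ff_lt (by omega) (by omega),
        ff_lt (by omega) (by omega), hf_small (by omega) (by omega),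
        hf_big (by omega) (by omega) (by omega),
        show v - (p+1) + k - 1 = v - p - 1 + k - 1 by omega]
    · -- 2p ≤ v : coin 2p
      have hstep := grd_step (n := k+3) (c := c) (v := v) (j := k+3)
        (Finset.mem_Icc.2 (by omega)) (by omega) (by omega)
        (fun i hi hle => by
          rcases hcc i hi with ⟨_,_,h⟩|⟨_,h⟩|⟨_,h⟩|⟨_,h⟩ <;> omega)
      rw [hstep, h3, ih (v - 2*p) (by omega), ff_shift' (by omega) hv]

end Closed

section KLemma

variable {k p : ℕ}

lemma hf_pos {r : ℕ} (hk : 2 ≤ k) (hp : k + 2 ≤ p) (hr : 1 ≤ r) : 1 ≤ hf k p r := by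
  rcases (by omega : (1 ≤ r ∧ r < p) ∨ r = p ∨ p + 1 ≤ r) with h|h|h
  · rw [hf_small h.1 h.2]
    exact ndivge1 (by omega) (by omega)
  · rw [h, hf_p (by omega)]
  · rw [hf_big (by omega) (by omega) h]
    exact Nat.le_add_left 1 _

lemma ff_K (hk : 2 ≤ k) (hp : k + 2 ≤ p) {cv : ℕ}
    (hcv : (1 ≤ cv ∧ cv ≤ k) ∨ cv = p ∨ cv = p + 1 ∨ cv = 2*p) :
    ∀ v, cv ≤ v → ff k p v ≤ ff k p (v - cv) + 1 := by
  have hcp : 1 ≤ cv ∧ cv ≤ 2*p := by rcases hcv with h|rfl|rfl|rfl <;> omega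
  have hcv' : (1 ≤ cv ∧ cv ≤ k) ∨ p = cv ∨ p + 1 = cv ∨ 2*p = cv := by
    rcases hcv with h|h|h|h
    · exact Or.inl h
    · exact Or.inr (Or.inl h.symm)
    · exact Or.inr (Or.inr (Or.inl h.symm))
    · exact Or.inr (Or.inr (Or.inr h.symm))
  clear hcv
  intro v
  induction v using Nat.strong_induction_on with
  | _ v ih =>
    intro hle
    by_cases hbig : 2*p + cv ≤ v
    · rw [ff_shift' (by omega) (by omega),
        ff_shift' (by omega) (show 2*p ≤ v - cv by omega)]
      have := ih (v - 2*p) (by omega) (by omega)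
      rw [show v - 2*p - cv = v - cv - 2*p by omega] at this
      omega
    · have hu : v - cv < 2*p := by omega
      rw [ff_lt (by omega) hu]
      by_cases h2 : v < 2*p
      · rw [ff_lt (by omega) h2]
        rcases hcv' with hs | rfl | rfl | rfl
        · -- small coin, window
          rcases (by omega : v - cv = 0 ∨ (1 ≤ v - cv ∧ v < p)
              ∨ (1 ≤ v - cv ∧ v - cv < p ∧ p ≤ v ∧ v ≤ p+1)
              ∨ (1 ≤ v - cv ∧ v - cv < p ∧ p+2 ≤ v)
              ∨ (v - cv = p ∧ v = p+1) ∨ (v - cv = p ∧ p+2 ≤ v)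
              ∨ p+1 ≤ v - cv) with h|h|h|h|h|h|h
          · rw [h, hf_zero, hf_small (by omega) (by omega),
              div_eq_one' (by omega) (by omega) (by omega)]
          · rw [hf_small (by omega) (by omega), hf_small (by omega) (by omega),
              show v + k - 1 = (v - cv + k - 1) + cv by omega]
            exact div_add_le' (by omega) (by omega)
          · have hfv : hf k p v = 1 := by
              rcases (by omega : v = p ∨ v = p + 1) with h'|h'
              · rw [h']; exact hf_p (by omega)
              · rw [h', hf_big (by omega) (by omega) le_rfl,
                  show p + 1 - p - 1 + k - 1 = k - 1 by omega,
                  Nat.div_eq_of_lt (by omega)]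
            rw [hfv]
            exact Nat.le_add_left 1 _
          · rw [hf_big (by omega) (by omega) (by omega),
              hf_small (by omega) (by omega)]
            exact Nat.add_le_add_right (Nat.div_le_div_right (by omega)) 1
          · rw [h.1, hf_p (by omega), h.2, hf_big (by omega) (by omega) le_rfl,
              show p + 1 - p - 1 + k - 1 = k - 1 by omega,
              Nat.div_eq_of_lt (by omega)]
            omega
          · rw [h.1, hf_p (by omega), hf_big (by omega) (by omega) (by omega)]
            exact Nat.add_le_add_right (ndivle1 (by omega) (by omega)) 1
          · rw [hf_big (by omega) (by omega) (by omega),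
              hf_big (by omega) (by omega) (by omega),
              show v - p - 1 + k - 1 = (v - cv - p - 1 + k - 1) + cv by omega]
            exact Nat.add_le_add_right (div_add_le' (by omega) (by omega)) 1
        · -- coin p, window
          rcases (by omega : v - p = 0 ∨ (1 ≤ v - p ∧ v - p ≤ p - 1)) with h|h
          · rw [h, hf_zero, show v = p by omega, hf_p (by omega)]
          · rw [hf_big (by omega) (by omega) (by omega),
              hf_small (by omega) (by omega)]
            exact Nat.add_le_add_right (Nat.div_le_div_right (by omega)) 1
        · -- coin p+1, window
          rcases (by omega : v - (p+1) = 0 ∨ 1 ≤ v - (p+1)) with h|h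
          · rw [h, hf_zero, show v = p + 1 by omega,
              hf_big (by omega) (by omega) le_rfl,
              show p + 1 - p - 1 + k - 1 = k - 1 by omega,
              Nat.div_eq_of_lt (by omega)]
          · rw [hf_big (by omega) (by omega) (by omega),
              hf_small (by omega) (by omega),
              show v - p - 1 + k - 1 = v - (p+1) + k - 1 by omega]
        · -- coin 2p, window : impossible
          omega
      · -- v ≥ 2p, v < 2p + cv
        rw [ff_shift' (by omega) (by omega), ff_lt (by omega) (by omega)]
        rcases hcv' with hs | rfl | rfl | rfl
        · -- small coin
          have h1 : hf k p (v - 2*p) ≤ 1 := by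
            rcases (by omega : v - 2*p = 0 ∨ 1 ≤ v - 2*p) with h|h
            · rw [h, hf_zero]; omega
            · rw [hf_small h (by omega)]
              exact ndivle1 (by omega) (by omega)
          have h2' : 1 ≤ hf k p (v - cv) := hf_pos hk hp (by omega)
          exact Nat.add_le_add_right (le_trans h1 h2') 1
        · -- coin p
          rcases (by omega : v = 2*p ∨ 2*p + 1 ≤ v) with h|h
          · rw [show v - 2*p = 0 by omega, hf_zero,
              show v - p = p by omega, hf_p (by omega)]
            omega
          · rw [hf_big (r := v - p) (by omega) (by omega) (by omega),
              hf_small (r := v - 2*p) (by omega) (by omega),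
              show v - 2*p + k - 1 = (v - p - p - 1 + k - 1) + 1 by omega]
            exact Nat.add_le_add_right (div_add_le' (by omega) (by omega)) 1
        · -- coin p+1
          rcases (by omega : v - (p+1) = p - 1 ∨ v - (p+1) = p ∨ v - (p+1) = p + 1
              ∨ (p + 2 ≤ v - (p+1) ∧ v - (p+1) ≤ 2*p - 2) ∨ v - (p+1) = 2*p - 1)
            with h|h|h|h|h
          · rw [show v - 2*p = 0 by omega, hf_zero]
            have := hf_pos hk hp (show 1 ≤ v - (p+1) by omega)
            omega
          · rw [h, hf_p (by omega), show v - 2*p = 1 by omega,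
              hf_small (by omega) (by omega), show 1 + k - 1 = k by omega,
              Nat.div_self (by omega : 0 < k)]
          · rw [h, hf_big (by omega) (by omega) le_rfl,
              show p + 1 - p - 1 + k - 1 = k - 1 by omega,
              Nat.div_eq_of_lt (by omega), show v - 2*p = 2 by omega,
              hf_small (by omega) (by omega), show 2 + k - 1 = k + 1 by omega,
              div_eq_one' (by omega) (by omega) (by omega)]
          · rw [hf_big (r := v - (p+1)) (by omega) (by omega) (by omega),
              hf_small (r := v - 2*p) (by omega) (by omega),
              show v - 2*p + k - 1 = (v - (p+1) - p - 1 + k - 1) + 2 by omega]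
            exact Nat.add_le_add_right (div_add_le' (by omega) (by omega)) 1
          · rw [show v - 2*p = p by omega, hf_p (by omega)]
            have := hf_pos hk hp (show 1 ≤ v - (p+1) by omega)
            omega
        · -- coin 2p
          exact le_refl _

end KLemma

section Backward

variable {k p : ℕ} {c : ℕ → ℕ}

lemma repr_lb (hk : 2 ≤ k) (hp : k + 2 ≤ p) (hs : CoinShape k p c) :
    ∀ v x, IsRepr (k+3) c v x → ff k p v ≤ ∑ i ∈ Finset.Icc 1 (k+3), x i := by
  intro v
  induction v using Nat.strong_induction_on with
  | _ v ih =>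
    intro x hx
    rcases Nat.eq_zero_or_pos v with rfl | hv
    · rw [ff_lt (by omega) (by omega), hf_zero]
      exact Nat.zero_le _
    · obtain ⟨j, hj, hxj⟩ := repr_exists_pos hx hv
      have hcjv : c j ≤ v := coin_le_of_repr hx hj hxj
      have hcv : (1 ≤ c j ∧ c j ≤ k) ∨ c j = p ∨ c j = p + 1 ∨ c j = 2*p := by
        rcases coin_cases hs j hj with ⟨_,_,h⟩|⟨_,h⟩|⟨_,h⟩|⟨_,h⟩ <;> omega
      have hcjpos : 0 < c j := by rcases hcv with h|h|h|h <;> omega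
      obtain ⟨hx', hs'⟩ := repr_remove hx hj hxj
      have hIH := ih (v - c j) (by omega) _ hx'
      have hK := ff_K hk hp hcv v hcjv
      omega

lemma backward_canonical (hk : 2 ≤ k) (hp : k + 2 ≤ p) (hs : CoinShape k p c) :
    Canonical (k+3) c := by
  intro v hv
  have hc1 : c 1 = 1 := hs.1 1 le_rfl (by omega)
  apply le_antisymm (opt_le_grd hc1 (by omega) v)
  rw [grd_closed hk hp hs v]
  obtain ⟨x, hx, hxs⟩ := opt_spec hc1 (by omega : 1 ≤ k+3) v
  rw [← hxs]
  exact repr_lb hk hp hs v x hx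

lemma backward_noncanonical (hk : 2 ≤ k) (hp : k + 2 ≤ p)
    (hsm : ∀ i, 1 ≤ i → i ≤ k → c i = i) (h1 : c (k+1) = p) (h2 : c (k+2) = p + 1) :
    ¬ Canonical (k+2) c := by
  intro hcan
  have hc1 : c 1 = 1 := hsm 1 le_rfl (by omega)
  have hcc : ∀ i ∈ Finset.Icc 1 (k+2),
      (1 ≤ i ∧ i ≤ k ∧ c i = i) ∨ (i = k+1 ∧ c i = p) ∨ (i = k+2 ∧ c i = p+1) := by
    intro i hi
    rw [Finset.mem_Icc] at hi
    rcases (by omega : (1 ≤ i ∧ i ≤ k) ∨ i = k+1 ∨ i = k+2) with h | rfl | rfl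
    · exact Or.inl ⟨h.1, h.2, hsm i h.1 h.2⟩
    · exact Or.inr (Or.inl ⟨rfl, h1⟩)
    · exact Or.inr (Or.inr ⟨rfl, h2⟩)
  -- opt ≤ 2 at 2p
  have hrepr : IsRepr (k+2) c (2*p) (fun i => if i = k+1 then 2 else 0) := by
    unfold IsRepr
    rw [Finset.sum_eq_single (k+1)]
    · simp [h1]; ring
    · intro i _ hne; simp [hne]
    · intro h; exact absurd (Finset.mem_Icc.2 ⟨by omega, by omega⟩) h
  have hopt : opt (k+2) c (2*p) ≤ 2 := by
    have := opt_le_of hrepr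
    rw [Finset.sum_eq_single (k+1)] at this
    · simpa using this
    · intro i _ hne; simp [hne]
    · intro h; exact absurd (Finset.mem_Icc.2 ⟨by omega, by omega⟩) h
  -- grd ≥ 3 at 2p
  have hstep1 := grd_step (n := k+2) (c := c) (v := 2*p) (j := k+2)
    (Finset.mem_Icc.2 (by omega)) (by omega) (by omega)
    (fun i hi hle => by
      rcases hcc i hi with ⟨_,_,h⟩|⟨_,h⟩|⟨_,h⟩ <;> omega)
  have hck : c k = k := hsm k (by omega) le_rfl
  have hstep2 := grd_step (n := k+2) (c := c) (v := 2*p - (p+1)) (j := k)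
    (Finset.mem_Icc.2 (by omega)) (by omega) (by omega)
    (fun i hi hle => by
      rcases hcc i hi with ⟨_,_,h⟩|⟨_,h⟩|⟨_,h⟩ <;> omega)
  rw [hck] at hstep2
  have hpos3 : 0 < grd (k+2) c (2*p - (p+1) - k) :=
    grd_pos hc1 (by omega) (by omega)
  have := hcan (2*p) (by omega)
  rw [h2] at hstep1
  omega

end Backward

section Forward

lemma sum_modEq (s : Finset ℕ) (f g : ℕ → ℕ) (e : ℕ)
    (h : ∀ i ∈ s, f i ≡ g i [MOD e]) :
    (∑ i ∈ s, f i) ≡ (∑ i ∈ s, g i) [MOD e] := by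
  induction s using Finset.cons_induction with
  | empty => rfl
  | cons a s ha ih =>
    rw [Finset.sum_cons, Finset.sum_cons]
    exact Nat.ModEq.add (h a (Finset.mem_cons_self a s))
      (ih fun i hi => h i (Finset.mem_cons_of_mem hi))

lemma forward {m : ℕ} {c : ℕ → ℕ} (hm : 4 ≤ m) (hc1 : c 1 = 1)
    (hmono : StrictMonoOn c (Set.Icc 1 (m+1)))
    (hcn : c (m+1) = 2 * c m - c 2)
    (hcanon : Canonical (m+1) c) (hnc : ¬ Canonical m c) :
    (∀ i, 1 ≤ i → i ≤ m - 2 → c i = i) ∧ c m = c (m-1) + 1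
      ∧ c (m+1) = 2 * c (m-1) ∧ m - 1 < c (m-1) := by
  have mono : ∀ i j, 1 ≤ i → i ≤ j → j ≤ m+1 → c i ≤ c j := fun i j h1 h2 h3 =>
    hmono.monotoneOn ⟨h1, by omega⟩ ⟨by omega, h3⟩ h2
  have smono : ∀ i j, 1 ≤ i → i < j → j ≤ m+1 → c i < c j := fun i j h1 h2 h3 =>
    hmono ⟨h1, by omega⟩ ⟨by omega, h3⟩ h2
  have hd2 : 2 ≤ c 2 := by have := smono 1 2 le_rfl (by omega) (by omega); omega
  have hdb : c 2 < c m := smono 2 m (by omega) (by omega) (by omega)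
  have hpb : c (m-1) < c m := smono (m-1) m (by omega) (by omega) (by omega)
  have hdp : c 2 < c (m-1) := smono 2 (m-1) (by omega) (by omega) (by omega)
  have hba : c m < c (m+1) := by
    have := smono m (m+1) (by omega) (by omega) le_rfl; omega
  have hmono' : StrictMonoOn c (Set.Icc 1 m) :=
    hmono.mono (Set.Icc_subset_Icc le_rfl (by omega))
  -- greedy step helpers (system m+1)
  have gstep_top : ∀ v, c (m+1) ≤ v → grd (m+1) c v = grd (m+1) c (v - c (m+1)) + 1 :=
    fun v hv => grd_step (Finset.mem_Icc.2 ⟨by omega, le_rfl⟩) hv (by omega)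
      (fun i hi _ => by
        have hi' := Finset.mem_Icc.1 hi
        exact mono i (m+1) hi'.1 hi'.2 le_rfl)
  have gstep_m : ∀ v, c m ≤ v → v < c (m+1) →
      grd (m+1) c v = grd (m+1) c (v - c m) + 1 :=
    fun v hv hv' => grd_step (Finset.mem_Icc.2 ⟨by omega, by omega⟩) hv (by omega)
      (fun i hi hle => by
        have hi' := Finset.mem_Icc.1 hi
        rcases (by omega : i ≤ m ∨ i = m+1) with h | rfl
        · exact mono i m hi'.1 h (by omega)
        · omega)
  have gstep_p : ∀ v, c (m-1) ≤ v → v < c m →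
      grd (m+1) c v = grd (m+1) c (v - c (m-1)) + 1 :=
    fun v hv hv' => grd_step (Finset.mem_Icc.2 ⟨by omega, by omega⟩) hv (by omega)
      (fun i hi hle => by
        have hi' := Finset.mem_Icc.1 hi
        rcases (by omega : i ≤ m - 1 ∨ i = m ∨ i = m+1) with h | rfl | rfl
        · exact mono i (m-1) hi'.1 h (by omega)
        · omega
        · omega)
  have gsmall : ∀ v, v < c 2 → grd (m+1) c v = v := fun v hv =>
    grd_eq_self hc1 (by omega) v (fun i h2 h3 => by
      have := mono 2 i (by omega) h2 h3; omega)
  -- a value below c 2 : grd ≤ self etc.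
  have hgle : ∀ v, grd (m+1) c v ≤ v := grd_le_self hc1 (by omega)
  -- S2 : c (m-1) ≤ c m - c 2 + 1
  have hS2 : c (m-1) ≤ c m - c 2 + 1 := by
    have h1 : grd (m+1) c (2 * c m - 1) = c 2 := by
      have e1 := gstep_top (2 * c m - 1) (by omega)
      rw [show 2 * c m - 1 - c (m+1) = c 2 - 1 by omega,
        gsmall (c 2 - 1) (by omega)] at e1
      omega
    have h2 : opt (m+1) c (2 * c m - 1) = c 2 := by
      rw [hcanon (2 * c m - 1) (by omega), h1]
    have h3 : opt (m+1) c (2 * c m - 1) ≤ opt (m+1) c (c m - 1) + 1 := by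
      have h4 := opt_add_le (n := m+1) hc1 (by omega) (c m - 1) (c m)
      have h5 : opt (m+1) c (c m) ≤ 1 :=
        opt_coin (Finset.mem_Icc.2 ⟨by omega, by omega⟩)
      rw [show c m - 1 + c m = 2 * c m - 1 by omega] at h4
      omega
    have h6 : opt (m+1) c (c m - 1) = grd (m+1) c (c m - 1) :=
      hcanon (c m - 1) (by omega)
    have h7 := gstep_p (c m - 1) (by omega) (by omega)
    have h8 := hgle (c m - 1 - c (m-1))
    omega
  -- min counterexample of the subsystem
  obtain ⟨w, hw, hwmin⟩ := exists_min_cex hc1 (by omega : 1 ≤ m) hnc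
  have hwa : c (m+1) ≤ w := by
    by_contra hcon
    push_neg at hcon
    have e1 := opt_restrict hc1 (by omega) (by omega) hcon
    have e2 := grd_restrict hcon
    have e3 := hcanon w hw.1
    have := hw.2
    omega
  have hkz : w < c (m-1) + c m :=
    minCex_lt (by omega) hc1 hmono' hw hwmin
  -- S4 : c (m-1) = c m - c 2 + 1  and  w = c (m+1)
  have hS4 : c (m-1) = c m - c 2 + 1 := by omega
  have hwval : w = c (m+1) := by omega
  -- S5 : grd (m+1) c (c (m-1) - 1) ≥ 2  and  c (m-2) ≤ c (m-1) - 2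
  have hopt2 : 2 ≤ opt m c w := by
    obtain ⟨x, hx, hxs⟩ := opt_spec hc1 (by omega : 1 ≤ m) w
    have hpos := opt_pos (by omega : 0 < w) hx
    by_contra hcon
    push_neg at hcon
    have hBle := repr_bound (B := c m) (fun i hi => by
      have hi' := Finset.mem_Icc.1 hi
      exact mono i m hi'.1 hi'.2 (by omega)) hx
    have : c m * (∑ i ∈ Finset.Icc 1 m, x i) ≤ c m * 1 :=
      Nat.mul_le_mul_left _ (by omega)
    omega
  have gstep_m_sys : grd m c w = grd m c (w - c m) + 1 :=
    grd_step (Finset.mem_Icc.2 ⟨by omega, le_rfl⟩) (by omega) (by omega)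
      (fun i hi _ => by
        have hi' := Finset.mem_Icc.1 hi
        exact mono i m hi'.1 hi'.2 (by omega))
  have hrestr : grd m c (w - c m) = grd (m+1) c (w - c m) := by
    rw [grd_restrict (by omega)]
  have hgp1 : 2 ≤ grd (m+1) c (c (m-1) - 1) := by
    have := hw.2
    rw [gstep_m_sys, hrestr, show w - c m = c (m-1) - 1 by omega] at this
    omega
  have hnotcoin : ∀ j ∈ Finset.Icc 1 (m+1), c j ≠ c (m-1) - 1 := by
    intro j hj hcj
    have hstep := grd_step (n := m+1) (c := c) (v := c (m-1) - 1) hj (by omega) (by omega)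
      (fun i hi hle => by omega)
    rw [hcj, Nat.sub_self, grd_zero] at hstep
    omega
  have hm2p : c (m-2) ≤ c (m-1) - 2 := by
    have h1 : c (m-2) < c (m-1) := smono (m-2) (m-1) (by omega) (by omega) (by omega)
    have h2 := hnotcoin (m-2) (Finset.mem_Icc.2 ⟨by omega, by omega⟩)
    omega
  -- S6 : for 2 ≤ j ≤ m-2, c j - (c 2 - 1) is a coin
  have hS6 : ∀ j, 2 ≤ j → j ≤ m - 2 →
      ∃ i ∈ Finset.Icc 1 (m+1), c i = c j - (c 2 - 1) := by
    intro j hj2 hjm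
    have hcjb : c 2 ≤ c j := mono 2 j (by omega) hj2 (by omega)
    have hcjp : c j ≤ c (m-2) := mono j (m-2) (by omega) hjm (by omega)
    have hv1 : c m ≤ c (m-1) + c j := by omega
    have hv2 : c (m-1) + c j < c (m+1) := by omega
    have hstep := gstep_m (c (m-1) + c j) hv1 hv2
    have hopt : opt (m+1) c (c (m-1) + c j) ≤ 2 := by
      have h4 := opt_add_le (n := m+1) hc1 (by omega) (c (m-1)) (c j)
      have h5 : opt (m+1) c (c (m-1)) ≤ 1 :=
        opt_coin (Finset.mem_Icc.2 ⟨by omega, by omega⟩)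
      have h6 : opt (m+1) c (c j) ≤ 1 :=
        opt_coin (Finset.mem_Icc.2 ⟨by omega, by omega⟩)
      omega
    have hcan := hcanon (c (m-1) + c j) (by omega)
    rw [show c (m-1) + c j - c m = c j - (c 2 - 1) by omega] at hstep
    have hgle1 : grd (m+1) c (c j - (c 2 - 1)) ≤ 1 := by omega
    exact grd_le_one_coin hc1 (by omega) (by omega) hgle1
  -- S7 : arithmetic progression
  have hAP : ∀ j, 1 ≤ j → j ≤ m - 2 → c j = (j-1) * (c 2 - 1) + 1 := by
    intro j
    induction j using Nat.strong_induction_on with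
    | _ j ih =>
      intro hj1 hjm
      rcases (by omega : j = 1 ∨ j = 2 ∨ 3 ≤ j) with rfl | rfl | hj3
      · simpa using hc1
      · simp; omega
      · obtain ⟨i, hi, hci⟩ := hS6 j (by omega) hjm
        have hi' := Finset.mem_Icc.1 hi
        have hcjb : c 2 ≤ c j := mono 2 j (by omega) (by omega) (by omega)
        have hc1i : 1 ≤ c i := by
          have := mono 1 i le_rfl hi'.1 hi'.2; omega
        have hcilt : c i < c j := by omega
        have hij : i < j := by
          by_contra hcon
          push_neg at hcon
          have := mono j i (by omega) hcon (by omega)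
          omega
        have hciAP : c i = (i-1) * (c 2 - 1) + 1 := ih i hij (by omega) (by omega)
        have hcj1 : c (j-1) = (j-2) * (c 2 - 1) + 1 := ih (j-1) (by omega) (by omega) (by omega)
        have hlt : c (j-1) < c j := smono (j-1) j (by omega) (by omega) (by omega)
        have h9 : (j-2) * (c 2 - 1) = (j-3) * (c 2 - 1) + (c 2 - 1) := by
          rw [show j - 2 = (j-3) + 1 by omega]; ring
        have h10 : (j-1) * (c 2 - 1) = (j-2) * (c 2 - 1) + (c 2 - 1) := by
          rw [show j - 1 = (j-2) + 1 by omega]; ring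
        have hij1 : i = j - 1 := by
          by_contra hcon
          have hij2 : i ≤ j - 2 := by omega
          have h11 : c i ≤ c (j-2) := mono i (j-2) (by omega) hij2 (by omega)
          have hcj2 : c (j-2) = (j-3) * (c 2 - 1) + 1 := ih (j-2) (by omega) (by omega) (by omega)
          omega
        rw [hij1, show j - 1 - 1 = j - 2 by omega] at hciAP
        rw [hij1] at hci
        omega
  -- S8 : c 2 = 2
  have hd2' : c 2 = 2 := by
    by_contra hd3'
    have hd3 : 3 ≤ c 2 := by omega
    -- canonicity at 2 * c (m-1) forces p - (c2 - 1) to be a coin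
    have h2plt : 2 * c (m-1) < c (m+1) := by omega
    have h2pge : c m ≤ 2 * c (m-1) := by omega
    have hstep := gstep_m (2 * c (m-1)) h2pge h2plt
    have hopt : opt (m+1) c (2 * c (m-1)) ≤ 2 := by
      have h4 := opt_add_le (n := m+1) hc1 (by omega) (c (m-1)) (c (m-1))
      have h5 : opt (m+1) c (c (m-1)) ≤ 1 :=
        opt_coin (Finset.mem_Icc.2 ⟨by omega, by omega⟩)
      rw [show c (m-1) + c (m-1) = 2 * c (m-1) by omega] at h4
      omega
    have hcan := hcanon (2 * c (m-1)) (by omega)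
    rw [show 2 * c (m-1) - c m = c (m-1) - (c 2 - 1) by omega] at hstep
    have hgle1 : grd (m+1) c (c (m-1) - (c 2 - 1)) ≤ 1 := by omega
    obtain ⟨i, hi, hci⟩ := grd_le_one_coin hc1 (by omega)
      (by omega : 0 < c (m-1) - (c 2 - 1)) hgle1
    have hi' := Finset.mem_Icc.1 hi
    have hile : i ≤ m - 2 := by
      by_contra hcon
      have : c (m-1) ≤ c i := mono (m-1) i (by omega) (by omega) (by omega)
      omega
    have hm2AP := hAP (m-2) (by omega) le_rfl
    have hm3AP := hAP (m-3) (by omega) (by omega)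
    have hb1 : (m-2-1) * (c 2 - 1) = (m-3-1) * (c 2 - 1) + (c 2 - 1) := by
      rw [show m-2-1 = (m-3-1)+1 by omega]; ring
    have hieq : i = m - 2 := by
      by_contra hcon
      have hile3 : i ≤ m - 3 := by omega
      have : c i ≤ c (m-3) := mono i (m-3) (by omega) hile3 (by omega)
      omega
    have hpm2eq : c (m-1) = c (m-2) + (c 2 - 1) := by
      rw [hieq] at hci
      omega
    -- grd at c (m-1) - 1 equals c 2 - 1
    have hcm2pos : 1 ≤ c (m-2) := by
      have := mono 1 (m-2) le_rfl (by omega) (by omega); omega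
    have hstep2 := grd_step (n := m+1) (c := c) (v := c (m-1) - 1) (j := m-2)
      (Finset.mem_Icc.2 ⟨by omega, by omega⟩) (by omega) (by omega)
      (fun i2 hi2 hle2 => by
        have hi2' := Finset.mem_Icc.1 hi2
        rcases (by omega : i2 ≤ m - 2 ∨ i2 = m-1 ∨ i2 = m ∨ i2 = m+1)
          with h | rfl | rfl | rfl
        · exact mono i2 (m-2) hi2'.1 h (by omega)
        · omega
        · omega
        · omega)
    rw [show c (m-1) - 1 - c (m-2) = c 2 - 2 by omega,
      gsmall (c 2 - 2) (by omega)] at hstep2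
    -- hence opt m c w ≤ c 2 - 1
    have hNle : opt m c w ≤ c 2 - 1 := by
      have := hw.2
      rw [gstep_m_sys, hrestr, show w - c m = c (m-1) - 1 by omega, hstep2] at this
      omega
    -- divisibility argument
    obtain ⟨x, hx, hxs⟩ := opt_spec hc1 (by omega : 1 ≤ m) w
    have mulsucc : ∀ t : ℕ, (t + 1) * (c 2 - 1) = t * (c 2 - 1) + (c 2 - 1) :=
      fun t => by ring
    have hBm2 : (m-2) * (c 2 - 1) = (m-2-1) * (c 2 - 1) + (c 2 - 1) := by
      have := mulsucc (m-2-1); rw [show m-2-1+1 = m-2 by omega] at this; exact this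
    have hBm1 : (m-1) * (c 2 - 1) = (m-2) * (c 2 - 1) + (c 2 - 1) := by
      have := mulsucc (m-2); rw [show m-2+1 = m-1 by omega] at this; exact this
    have hdvd : ∀ q ∈ Finset.Icc 1 m, (c 2 - 1) ∣ (c q - 1) := by
      intro q hq
      have hq' := Finset.mem_Icc.1 hq
      rcases (by omega : (1 ≤ q ∧ q ≤ m - 2) ∨ q = m-1 ∨ q = m) with h | h | h
      · have hq2 := hAP q h.1 h.2
        refine ⟨q - 1, ?_⟩
        have hcm : (c 2 - 1) * (q - 1) = (q - 1) * (c 2 - 1) := Nat.mul_comm _ _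
        omega
      · refine ⟨m - 2, ?_⟩
        have hcm : (c 2 - 1) * (m - 2) = (m - 2) * (c 2 - 1) := Nat.mul_comm _ _
        rw [h]
        omega
      · refine ⟨m - 1, ?_⟩
        have hcm : (c 2 - 1) * (m - 1) = (m - 1) * (c 2 - 1) := Nat.mul_comm _ _
        rw [h]
        omega
    have hcipos : ∀ i2 ∈ Finset.Icc 1 m, 1 ≤ c i2 := by
      intro i2 hi2
      have hi2' := Finset.mem_Icc.1 hi2
      have := mono 1 i2 le_rfl hi2'.1 (by omega); omega
    have hsplit : ∑ i2 ∈ Finset.Icc 1 m, c i2 * x i2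
        = (∑ i2 ∈ Finset.Icc 1 m, (c i2 - 1) * x i2) + ∑ i2 ∈ Finset.Icc 1 m, x i2 := by
      rw [← Finset.sum_add_distrib]
      apply Finset.sum_congr rfl
      intro i2 hi2
      obtain ⟨u, hu⟩ : ∃ u, c i2 = u + 1 := ⟨c i2 - 1, by have := hcipos i2 hi2; omega⟩
      rw [hu, Nat.add_sub_cancel, Nat.add_mul, Nat.one_mul]
    have hdvdsum : (c 2 - 1) ∣ ∑ i2 ∈ Finset.Icc 1 m, (c i2 - 1) * x i2 :=
      Finset.dvd_sum (fun i2 hi2 => (hdvd i2 hi2).mul_right _)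
    have hxw : (∑ i2 ∈ Finset.Icc 1 m, (c i2 - 1) * x i2) + ∑ i2 ∈ Finset.Icc 1 m, x i2 = w := by
      rw [← hsplit]; exact hx
    have hdcm : (c 2 - 1) ∣ (c m - 1) := hdvd m (Finset.mem_Icc.2 ⟨by omega, le_rfl⟩)
    have hwd : (c 2 - 1) ∣ (w - 1) := by
      rw [show w - 1 = 2 * (c m - 1) - (c 2 - 1) by omega]
      exact Nat.dvd_sub (hdcm.mul_left 2) dvd_rfl
    have hNd : (c 2 - 1) ∣ (opt m c w - 1) := by
      have h1 : (c 2 - 1) ∣ ((w - 1) - ∑ i2 ∈ Finset.Icc 1 m, (c i2 - 1) * x i2) :=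
        Nat.dvd_sub hwd hdvdsum
      rw [show (w - 1) - ∑ i2 ∈ Finset.Icc 1 m, (c i2 - 1) * x i2
          = opt m c w - 1 by omega] at h1
      exact h1
    have := Nat.le_of_dvd (by omega : 0 < opt m c w - 1) hNd
    omega
  refine ⟨?_, by omega, by omega, ?_⟩
  · intro i h1 h2
    have h3 := hAP i h1 h2
    rw [hd2'] at h3
    rw [show (2:ℕ) - 1 = 1 by omega, Nat.mul_one] at h3
    omega
  · have h3 := hAP (m-2) (by omega) le_rfl
    rw [hd2'] at h3
    rw [show (2:ℕ) - 1 = 1 by omega, Nat.mul_one] at h3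
    omega

end Forward

/-- General characterization for `cₙ = 2c_{n-1} - c₂`. -/
theorem general_characterization (n : ℕ) (c : ℕ → ℕ) (hn : 5 ≤ n)
    (hsys : IsSystem n c) (hcn : c n = 2 * c (n - 1) - c 2) :
    (Canonical n c ∧ ¬ Canonical (n - 1) c) ↔
      ((∀ i, 1 ≤ i → i ≤ n - 3 → c i = i) ∧
        c (n - 1) = c (n - 2) + 1 ∧ c n = 2 * c (n - 2) ∧ n - 2 < c (n - 2)) := by
  obtain ⟨hc1, hmono⟩ := hsys
  obtain ⟨m, rfl⟩ : ∃ m, n = m + 1 := ⟨n - 1, by omega⟩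
  have hm : 4 ≤ m := by omega
  have e1 : m + 1 - 1 = m := by omega
  have e2 : m + 1 - 2 = m - 1 := by omega
  have e3 : m + 1 - 3 = m - 2 := by omega
  simp only [e1, e2, e3] at hcn ⊢
  constructor
  · rintro ⟨h1, h2⟩
    exact forward hm hc1 hmono hcn h1 h2
  · rintro ⟨hA, hB, hC, hD⟩
    have hk : 2 ≤ m - 2 := by omega
    have hshape : CoinShape (m-2) (c (m-1)) c := by
      refine ⟨fun i hi1 hi2 => hA i hi1 hi2, ?_, ?_, ?_⟩
      · rw [show m - 2 + 1 = m - 1 by omega]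
      · rw [show m - 2 + 2 = m by omega]; exact hB
      · rw [show m - 2 + 3 = m + 1 by omega]; exact hC
    have hp : (m - 2) + 2 ≤ c (m-1) := by omega
    constructor
    · have := backward_canonical hk hp hshape
      rwa [show m - 2 + 3 = m + 1 by omega] at this
    · have h1' : c (m - 2 + 1) = c (m-1) := by rw [show m - 2 + 1 = m - 1 by omega]
      have h2' : c (m - 2 + 2) = c (m-1) + 1 := by
        rw [show m - 2 + 2 = m by omega]; exact hB
      have := backward_noncanonical hk hp (fun i hi1 hi2 => hA i hi1 hi2) h1' h2'
      rwa [show m - 2 + 2 = m by omega] at this
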